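/- Let Ξ be a quasi-x-tower set in F² with S_x(Ξ) = L_x(m₀,…,m_ν), and let B ⊂ F² be a finite set of distinct points all with the same ordinate y^B not occurring among the ordinates of Ξ, with pairwise distinct abscissae, such that B ∩ Ξ = ∅ and the union of all sets of abscissae of Ξ is strictly contained in the set of abscissae of B. Then Ξ ∪ B is an x-tower set with S_x(Ξ ∪ B) = L_x(m_B, m₀, …, m_ν), where m_B + 1 = |B| and m_B > m₀ > ⋯ > m_ν. -/

import Mathlib

/-- Let `Ξ` be a quasi-x-tower set with `S_x(Ξ) = L_x(m₀,…,m_ν)`, and let `B` be a horizontal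
set of distinct points with new ordinate `y^B`, disjoint from `Ξ`, whose abscissa set strictly
contains the union of all abscissa sets of `Ξ`. Then `Ξ ∪ B` is an x-tower set with
`S_x(Ξ ∪ B) = L_x(m_B, m₀, …, m_ν)`, where `m_B + 1 = |B|` and `m_B > m₀ > ⋯ > m_ν`. -/
theorem stmt_6 {F : Type*} [Field F]
    (ν : ℕ) (m : ℕ → ℕ) (y : ℕ → F) (x : ℕ → ℕ → F)
    (hm : ∀ j, j < ν → m (j + 1) < m j)
    (hy : ∀ j j', j ≤ ν → j' ≤ ν → y j = y j' → j = j')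
    (hx : ∀ j, j ≤ ν → ∀ i i', i ≤ m j → i' ≤ m j → x j i = x j i' → i = i')
    (Ξ : Set (F × F))
    (hΞ : Ξ = {p | ∃ j ≤ ν, ∃ i ≤ m j, p = (x j i, y j)})
    (hquasi : ∃ j ≤ ν, ∃ i ≤ m j, ∀ s ≤ m 0, x j i ≠ x 0 s)
    (mB : ℕ) (xB : ℕ → F) (yB : F)
    (hxB : ∀ s s', s ≤ mB → s' ≤ mB → xB s = xB s' → s = s')
    (hyB : ∀ j, j ≤ ν → yB ≠ y j)
    (B : Set (F × F)) (hB : B = {p | ∃ s ≤ mB, p = (xB s, yB)})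
    (hdisj : B ∩ Ξ = ∅)
    (hsub : ∀ j, j ≤ ν → ∀ i, i ≤ m j → ∃ s ≤ mB, x j i = xB s)
    (hstrict : ∃ s ≤ mB, ∀ j, j ≤ ν → ∀ i, i ≤ m j → x j i ≠ xB s) :
    m 0 < mB ∧
      ∃ (m' : ℕ → ℕ) (y' : ℕ → F) (x' : ℕ → ℕ → F),
        m' 0 = mB ∧ (∀ j, j ≤ ν → m' (j + 1) = m j) ∧
        (∀ j, j < ν + 1 → m' (j + 1) < m' j) ∧
        (∀ j j', j ≤ ν + 1 → j' ≤ ν + 1 → y' j = y' j' → j = j') ∧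
        (∀ j, j ≤ ν + 1 → ∀ i i', i ≤ m' j → i' ≤ m' j → x' j i = x' j i' → i = i') ∧
        (∀ j, j ≤ ν + 1 → ∀ i, i ≤ m' j → ∃ s ≤ m' 0, x' j i = x' 0 s) ∧
        Ξ ∪ B = {p | ∃ j ≤ ν + 1, ∃ i ≤ m' j, p = (x' j i, y' j)} := by

  have key : m 0 < mB := by
    obtain ⟨s₀, hs₀, hs₀'⟩ := hstrict
    choose g hg1 hg2 using hsub 0 (Nat.zero_le ν)
    set G : ℕ → ℕ := fun i => if h : i ≤ m 0 then g i h else 0 with hG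
    have hcard := Finset.card_le_card_of_injOn G
      (s := Finset.range (m 0 + 1)) (t := (Finset.range (mB + 1)).erase s₀)
      (fun i hi => by
        simp only [Finset.mem_coe, Finset.mem_range, Nat.lt_succ_iff] at hi
        simp only [hG, dif_pos hi, Finset.mem_coe, Finset.mem_erase, Finset.mem_range, Nat.lt_succ_iff]
        exact ⟨fun h => hs₀' 0 (Nat.zero_le ν) i hi (h ▸ hg2 i hi), hg1 i hi⟩)
      (fun a ha b hb hab => by
        simp only [Finset.mem_coe, Finset.mem_range, Nat.lt_succ_iff] at ha hb
        simp only [hG, dif_pos ha, dif_pos hb] at hab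
        have : xB (g a ha) = xB (g b hb) := by rw [hab]
        have : x 0 a = x 0 b := by rw [hg2 a ha, hg2 b hb, hab]
        exact hx 0 (Nat.zero_le ν) a b ha hb this)
    rw [Finset.card_range, Finset.card_erase_of_mem
      (by simp [Nat.lt_succ_iff, hs₀]), Finset.card_range] at hcard
    omega
  refine ⟨key, (fun j => match j with | 0 => mB | j+1 => m j),
    (fun j => match j with | 0 => yB | j+1 => y j),
    (fun j => match j with | 0 => xB | j+1 => x j),
    rfl, fun j hj => rfl, ?_, ?_, ?_, ?_, ?_⟩
  · rintro (_|k) hj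
    · exact key
    · exact hm k (by omega)
  · rintro (_|j) (_|j') hj hj' h
    · rfl
    · exact absurd h (hyB j' (by omega))
    · exact absurd h.symm (hyB j (by omega))
    · exact congrArg Nat.succ (hy j j' (by omega) (by omega) h)
  · rintro (_|j) hj i i' hi hi' h
    · exact hxB i i' hi hi' h
    · exact hx j (by omega) i i' hi hi' h
  · rintro (_|j) hj i hi
    · exact ⟨i, hi, rfl⟩
    · exact hsub j (by omega) i hi
  · subst hΞ hB
    ext p
    simp only [Set.mem_union, Set.mem_setOf_eq]
    constructor
    · rintro (⟨j, hj, i, hi, rfl⟩ | ⟨s, hs, rfl⟩)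
      · exact ⟨j + 1, by omega, i, hi, rfl⟩
      · exact ⟨0, by omega, s, hs, rfl⟩
    · rintro ⟨(_|j), hj, i, hi, rfl⟩
      · exact Or.inr ⟨i, hi, rfl⟩
      · exact Or.inl ⟨j, by omega, i, hi, rfl⟩
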